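/- Fix positive reals d1, d2, d3, d4 and angles α1, α2, α3, α4 ∈ (0, π) satisfying the deltoid condition: either (α1 = α2 and α3 = α4) or (α1 + α2 = π and α3 + α4 = π), together with cos²α1 ≠ cos²α3. Consider the set of tuples (v, w1, w2, w3, w4) of points of ℝ³ with dist(v, w_i) = d_i and ∠ w_i v w_{i+1} = α_i for all i (indices mod 4). Then the subset of flat tuples — those in which all five points are coplanar — is nonempty and is partitioned by congruence (simultaneous application of one isometry of ℝ³ to all five points) into exactly two classes; moreover, in every flat tuple the three points v, w1, w3 are collinear. -/

import Mathlib

open EuclideanGeometry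

noncomputable section

/-- Points of Euclidean 3-space. -/
abbrev Pt : Type := EuclideanSpace ℝ (Fin 3)

/-- A pyramid tuple: an apex together with four base points (indices mod 4). -/
abbrev PyrTuple : Type := Pt × (ZMod 4 → Pt)

/-- The set of pyramid tuples with apex-to-base distances `d i` and apex angles `α i`. -/
def pyrSet (d α : ZMod 4 → ℝ) : Set PyrTuple :=
  {t | ∀ i : ZMod 4, dist t.1 (t.2 i) = d i ∧ ∠ (t.2 i) t.1 (t.2 (i + 1)) = α i}

/-- A pyramid tuple is flat if its five points are coplanar. -/
def IsFlat (t : PyrTuple) : Prop :=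
  Coplanar ℝ ({t.1, t.2 0, t.2 1, t.2 2, t.2 3} : Set Pt)

/-- Two pyramid tuples are congruent if a single isometry of `ℝ³` maps the first
onto the second componentwise. -/
def PyrCongruent (t₁ t₂ : PyrTuple) : Prop :=
  ∃ σ : Pt ≃ᵢ Pt, σ t₁.1 = t₂.1 ∧ ∀ i, σ (t₁.2 i) = t₂.2 i

namespace DeltoidAux

open Real
open scoped RealInnerProductSpace

lemma pyrCongruent_symm {t₁ t₂ : PyrTuple} (h : PyrCongruent t₁ t₂) : PyrCongruent t₂ t₁ := by
  obtain ⟨e, h1, h2⟩ := h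
  refine ⟨e.symm, ?_, fun i => ?_⟩
  · rw [← h1, e.symm_apply_apply]
  · rw [← h2 i, e.symm_apply_apply]

lemma zmod4_cases : ∀ i : ZMod 4, i = 0 ∨ i = 1 ∨ i = 2 ∨ i = 3 := by decide

/-- basic square-root-free square facts -/
lemma sq_cases {a b : ℝ} (h : a^2 = b^2) : a = b ∨ a = -b := by
  have h2 : (a - b) * (a + b) = 0 := by linear_combination h
  rcases mul_eq_zero.1 h2 with h3 | h3
  · left; linarith
  · right; linarith

lemma eq_of_sq_eq_sq {a b : ℝ} (ha : 0 ≤ a) (hb : 0 ≤ b) (h : a^2 = b^2) : a = b := by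
  rcases sq_cases h with h1 | h1
  · exact h1
  · nlinarith

def E1 : Pt := EuclideanSpace.single 0 1
def E2 : Pt := EuclideanSpace.single 1 1

def pt (x y : ℝ) : Pt := x • E1 + y • E2

lemma inner_E11 : ⟪E1, E1⟫ = 1 := by
  simp [E1, EuclideanSpace.inner_single_left, EuclideanSpace.single_apply]

lemma inner_E22 : ⟪E2, E2⟫ = 1 := by
  simp [E2, EuclideanSpace.inner_single_left, EuclideanSpace.single_apply]

lemma inner_E12 : ⟪E1, E2⟫ = 0 := by
  simp [E1, E2, EuclideanSpace.inner_single_left, EuclideanSpace.single_apply]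

lemma inner_E21 : ⟪E2, E1⟫ = 0 := by
  simp [E1, E2, EuclideanSpace.inner_single_left, EuclideanSpace.single_apply]

lemma inner_pt (x y x' y' : ℝ) : ⟪pt x y, pt x' y'⟫ = x * x' + y * y' := by
  simp only [pt, inner_add_left, inner_add_right, real_inner_smul_left, real_inner_smul_right,
    inner_E11, inner_E12, inner_E21, inner_E22]
  ring

lemma norm_pt_sq (x y : ℝ) : ‖pt x y‖ ^ 2 = x ^ 2 + y ^ 2 := by
  rw [← real_inner_self_eq_norm_sq, inner_pt]; ring

lemma norm_pt {x y r : ℝ} (hr : 0 ≤ r) (h : x ^ 2 + y ^ 2 = r ^ 2) : ‖pt x y‖ = r := by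
  apply eq_of_sq_eq_sq (norm_nonneg _) hr
  rw [norm_pt_sq, h]

lemma dist_pt0 {x y r : ℝ} (hr : 0 ≤ r) (h : x ^ 2 + y ^ 2 = r ^ 2) :
    dist (0 : Pt) (pt x y) = r := by
  rw [dist_zero_left, norm_pt hr h]

lemma pt_sub (x y x' y' : ℝ) : pt x y - pt x' y' = pt (x - x') (y - y') := by
  simp only [pt, sub_smul]; module

lemma dist_pt_sq (x y x' y' : ℝ) :
    dist (pt x y) (pt x' y') ^ 2 = (x - x') ^ 2 + (y - y') ^ 2 := by
  rw [dist_eq_norm, pt_sub, norm_pt_sq]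

lemma angle_eq_of_inner {u w : Pt} {r s θ : ℝ} (hr : 0 < r) (hs : 0 < s)
    (hu : ‖u‖ = r) (hw : ‖w‖ = s) (hin : ⟪u, w⟫ = r * s * Real.cos θ)
    (hθ0 : 0 ≤ θ) (hθπ : θ ≤ Real.pi) : InnerProductGeometry.angle u w = θ := by
  unfold InnerProductGeometry.angle
  rw [hu, hw, hin]
  rw [show r * s * Real.cos θ / (r * s) = Real.cos θ by field_simp]
  exact Real.arccos_cos hθ0 hθπ

lemma angle_pts {x y x' y' r s θ : ℝ} (hr : 0 < r) (hs : 0 < s)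
    (hxy : x ^ 2 + y ^ 2 = r ^ 2) (hxy' : x' ^ 2 + y' ^ 2 = s ^ 2)
    (hin : x * x' + y * y' = r * s * Real.cos θ)
    (hθ0 : 0 ≤ θ) (hθπ : θ ≤ Real.pi) :
    ∠ (pt x y) (0 : Pt) (pt x' y') = θ := by
  have h1 : ∠ (pt x y) (0 : Pt) (pt x' y') = InnerProductGeometry.angle (pt x y) (pt x' y') := by
    simp only [EuclideanGeometry.angle, vsub_eq_sub, sub_zero]
  rw [h1]
  exact angle_eq_of_inner hr hs (norm_pt hr.le hxy) (norm_pt hs.le hxy')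
    (by rw [inner_pt]; exact hin) hθ0 hθπ

lemma pt_mem_span (x y : ℝ) : pt x y ∈ Submodule.span ℝ ({E1, E2} : Set Pt) :=
  Submodule.add_mem _
    (Submodule.smul_mem _ _ (Submodule.subset_span (by simp)))
    (Submodule.smul_mem _ _ (Submodule.subset_span (by simp)))

lemma coplanar_of_pts {S : Set Pt} (h : ∀ p ∈ S, ∃ x y, p = pt x y) : Coplanar ℝ S := by
  have hle : vectorSpan ℝ S ≤ Submodule.span ℝ ({E1, E2} : Set Pt) := by
    rw [vectorSpan]
    apply Submodule.span_le.2
    rintro z ⟨p, hp, q, hq, rfl⟩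
    obtain ⟨x, y, rfl⟩ := h p hp
    obtain ⟨x', y', rfl⟩ := h q hq
    show pt x y -ᵥ pt x' y' ∈ _
    rw [vsub_eq_sub, pt_sub]
    exact pt_mem_span _ _
  classical
  have hfin : Module.finrank ℝ (vectorSpan ℝ S) ≤ 2 := by
    refine le_trans (Submodule.finrank_mono hle) ?_
    refine le_trans (finrank_span_le_card _) ?_
    rw [Set.toFinset_insert, Set.toFinset_singleton]
    exact le_trans (Finset.card_insert_le _ _) (by simp)
  exact coplanar_iff_finrank_le_two.2 hfin

/-- The central algebraic fact. -/
lemma crux {c0 s0 c3 s3 d2 σ a b e3 : ℝ} (hs0 : 0 < s0) (hs3 : 0 < s3)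
    (h0 : c0^2 + s0^2 = 1) (h3 : c3^2 + s3^2 = 1) (hne : c0^2 ≠ c3^2)
    (hd2 : 0 < d2) (hσ : σ = 1 ∨ σ = -1) (he3 : e3 = 1 ∨ e3 = -1)
    (hab : a^2 + b^2 = d2^2)
    (h1 : c0*a + s0*b = σ*c0*d2)
    (h2 : c3*a + e3*s3*b = σ*c3*d2) : a = σ*d2 ∧ b = 0 := by
  have he3sq : e3^2 = 1 := by rcases he3 with h|h <;> rw [h] <;> norm_num
  have hσ2 : σ^2 = 1 := by rcases hσ with h|h <;> rw [h] <;> norm_num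
  have hσ0 : σ ≠ 0 := by rcases hσ with h|h <;> rw [h] <;> norm_num
  have hb : b = 0 := by
    by_contra hb
    have k1 : c0*(a - σ*d2) + s0*b = 0 := by linear_combination h1
    have k2 : c3*(a - σ*d2) + e3*s3*b = 0 := by linear_combination h2
    have q1 : c0^2*(a - σ*d2)^2 = s0^2*b^2 := by
      linear_combination (c0*(a - σ*d2) - s0*b) * k1
    have q2 : c3^2*(a - σ*d2)^2 = s3^2*b^2 := by
      linear_combination (c3*(a - σ*d2) - e3*s3*b) * k2 + s3^2*b^2 * he3sq
    by_cases ha : a = σ*d2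
    · rw [ha] at k1
      have : s0 * b = 0 := by linarith [k1]
      rcases mul_eq_zero.1 this with h|h
      · exact absurd h (ne_of_gt hs0)
      · exact hb h
    · have hX : 0 < (a - σ*d2)^2 := pow_two_pos_of_ne_zero (sub_ne_zero.2 ha)
      have e : (c0^2*s3^2 - c3^2*s0^2) * (a - σ*d2)^2 = 0 := by
        linear_combination s3^2*q1 - s0^2*q2
      have key : c0^2*s3^2 = c3^2*s0^2 := by
        rcases mul_eq_zero.1 e with h|h
        · linarith
        · exact absurd h (ne_of_gt hX)
      exact hne (by linear_combination key - c0^2*h3 + c3^2*h0)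
  refine ⟨?_, hb⟩
  have ha2 : a^2 = (σ*d2)^2 := by
    have : (σ*d2)^2 = d2^2 := by rw [mul_pow, hσ2, one_mul]
    rw [this]; nlinarith [hab, hb]
  rcases sq_cases ha2 with h|h
  · exact h
  · exfalso
    rw [hb] at h1 h2
    rw [h] at h1 h2
    have hc0 : c0 = 0 := by
      have h1' : 2*(σ*d2)*c0 = 0 := by linear_combination -h1
      rcases mul_eq_zero.1 h1' with h'|h'
      · exfalso
        rcases mul_eq_zero.1 h' with h''|h''
        · norm_num at h''
        · exact mul_ne_zero hσ0 (ne_of_gt hd2) h''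
      · exact h'
    have hc3 : c3 = 0 := by
      have h2' : 2*(σ*d2)*c3 = 0 := by linear_combination -h2
      rcases mul_eq_zero.1 h2' with h'|h'
      · exfalso
        rcases mul_eq_zero.1 h' with h''|h''
        · norm_num at h''
        · exact mul_ne_zero hσ0 (ne_of_gt hd2) h''
      · exact h'
    exact hne (by rw [hc0, hc3])

/-- a rigid motion carrying the standard planar frame to any orthonormal frame. -/
lemma exists_frame_isometry (v f1 f2 : Pt) (h1 : ‖f1‖ = 1) (h2 : ‖f2‖ = 1)
    (h12 : ⟪f1, f2⟫ = 0) :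
    ∃ e : Pt ≃ᵢ Pt, ∀ x y : ℝ, e (pt x y) = v + (x • f1 + y • f2) := by
  classical
  have hf1f1 : ⟪f1, f1⟫ = 1 := by rw [real_inner_self_eq_norm_sq, h1]; norm_num
  have hf2f2 : ⟪f2, f2⟫ = 1 := by rw [real_inner_self_eq_norm_sq, h2]; norm_num
  have h21 : ⟪f2, f1⟫ = 0 := by rw [real_inner_comm]; exact h12
  have hcard : Module.finrank ℝ Pt = Fintype.card (Fin 3) := by simp
  have hON : Orthonormal ℝ (({0,1} : Set (Fin 3)).restrict ![f1, f2, 0]) := by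
    rw [orthonormal_iff_ite]
    rintro ⟨i, hi⟩ ⟨j, hj⟩
    simp only [Set.mem_insert_iff, Set.mem_singleton_iff] at hi hj
    rcases hi with rfl|rfl <;> rcases hj with rfl|rfl <;>
      simp [Set.restrict, Subtype.mk.injEq, Matrix.cons_val_zero, Matrix.cons_val_one,
        Matrix.head_cons, hf1f1, hf2f2, h12, h21, h1, h2]
  obtain ⟨B, hB⟩ := hON.exists_orthonormalBasis_extension_of_card_eq hcard
  have hB0 : B 0 = f1 := hB 0 (by simp)
  have hB1 : B 1 = f2 := hB 1 (by simp)
  refine ⟨(B.repr.symm.toIsometryEquiv).trans (IsometryEquiv.addLeft v), fun x y => ?_⟩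
  simp only [IsometryEquiv.trans_apply, LinearIsometryEquiv.coe_toIsometryEquiv,
    IsometryEquiv.addLeft_apply]
  congr 1
  rw [pt, map_add, map_smul, map_smul, E1, E2, B.repr_symm_single, B.repr_symm_single,
    hB0, hB1]

/-- the standard flat pyramid tuples. -/
def stdW (d : ZMod 4 → ℝ) (c0 s0 σ c3 s3 η : ℝ) : ZMod 4 → Pt := fun i =>
  if i = 0 then pt (d 0) 0
  else if i = 1 then pt (d 1 * c0) (d 1 * s0)
  else if i = 2 then pt (σ * d 2) 0
  else pt (d 3 * c3) (η * (d 3 * s3))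

def stdT (d : ZMod 4 → ℝ) (c0 s0 σ c3 s3 η : ℝ) : PyrTuple :=
  ((0 : Pt), stdW d c0 s0 σ c3 s3 η)

variable {d α : ZMod 4 → ℝ} {σ η : ℝ}

lemma stdW_0 (c0 s0 σ c3 s3 η : ℝ) : stdW d c0 s0 σ c3 s3 η 0 = pt (d 0) 0 := by
  simp [stdW]

lemma stdW_1 (c0 s0 σ c3 s3 η : ℝ) : stdW d c0 s0 σ c3 s3 η 1 = pt (d 1 * c0) (d 1 * s0) := by
  simp [stdW, show (1:ZMod 4) ≠ 0 by decide]

lemma stdW_2 (c0 s0 σ c3 s3 η : ℝ) : stdW d c0 s0 σ c3 s3 η 2 = pt (σ * d 2) 0 := by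
  simp [stdW, show (2:ZMod 4) ≠ 0 by decide, show (2:ZMod 4) ≠ 1 by decide]

lemma stdW_3 (c0 s0 σ c3 s3 η : ℝ) :
    stdW d c0 s0 σ c3 s3 η 3 = pt (d 3 * c3) (η * (d 3 * s3)) := by
  simp [stdW, show (3:ZMod 4) ≠ 0 by decide, show (3:ZMod 4) ≠ 1 by decide,
    show (3:ZMod 4) ≠ 2 by decide]

lemma stdT_mem (hd : ∀ i, 0 < d i) (hα : ∀ i, α i ∈ Set.Ioo 0 Real.pi)
    (hσ : σ = 1 ∨ σ = -1) (hη : η = 1 ∨ η = -1)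
    (hc1 : Real.cos (α 1) = σ * Real.cos (α 0))
    (hc2 : Real.cos (α 2) = σ * Real.cos (α 3)) :
    stdT d (Real.cos (α 0)) (Real.sin (α 0)) σ (Real.cos (α 3)) (Real.sin (α 3)) η
      ∈ pyrSet d α := by
  have hσ2 : σ^2 = 1 := by rcases hσ with h|h <;> rw [h] <;> norm_num
  have hη2 : η^2 = 1 := by rcases hη with h|h <;> rw [h] <;> norm_num
  have hcs : ∀ j, (Real.cos (α j))^2 + (Real.sin (α j))^2 = 1 := fun j => by
    rw [add_comm]; exact Real.sin_sq_add_cos_sq _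
  intro i
  rcases zmod4_cases i with rfl|rfl|rfl|rfl <;>
    refine ⟨?_, ?_⟩ <;>
    simp only [stdT, show ((0:ZMod 4)+1) = 1 by decide, show ((1:ZMod 4)+1) = 2 by decide,
      show ((2:ZMod 4)+1) = 3 by decide, show ((3:ZMod 4)+1) = 0 by decide,
      stdW_0, stdW_1, stdW_2, stdW_3]
  · exact dist_pt0 (hd 0).le (by ring)
  · exact angle_pts (hd 0) (hd 1) (by ring)
      (by linear_combination (d 1^2) * hcs 0) (by ring) (hα 0).1.le (hα 0).2.le
  · exact dist_pt0 (hd 1).le (by linear_combination (d 1^2) * hcs 0)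
  · exact angle_pts (hd 1) (hd 2) (by linear_combination (d 1^2) * hcs 0)
      (by linear_combination (d 2^2) * hσ2)
      (by rw [hc1]; ring) (hα 1).1.le (hα 1).2.le
  · exact dist_pt0 (hd 2).le (by linear_combination (d 2^2) * hσ2)
  · exact angle_pts (hd 2) (hd 3) (by linear_combination (d 2^2) * hσ2)
      (by linear_combination (d 3^2) * hcs 3 + (d 3 * Real.sin (α 3))^2 * hη2)
      (by rw [hc2]; ring) (hα 2).1.le (hα 2).2.le
  · exact dist_pt0 (hd 3).le
      (by linear_combination (d 3^2) * hcs 3 + (d 3 * Real.sin (α 3))^2 * hη2)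
  · exact angle_pts (hd 3) (hd 0)
      (by linear_combination (d 3^2) * hcs 3 + (d 3 * Real.sin (α 3))^2 * hη2) (by ring)
      (by ring) (hα 3).1.le (hα 3).2.le

lemma stdT_flat (c0 s0 σ c3 s3 η : ℝ) : IsFlat (stdT d c0 s0 σ c3 s3 η) := by
  apply coplanar_of_pts
  intro p hp
  simp only [stdT, Set.mem_insert_iff, Set.mem_singleton_iff] at hp
  rcases hp with rfl|rfl|rfl|rfl|rfl
  · exact ⟨0, 0, by simp [pt]⟩
  · rw [stdW_0]; exact ⟨_, _, rfl⟩
  · rw [stdW_1]; exact ⟨_, _, rfl⟩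
  · rw [stdW_2]; exact ⟨_, _, rfl⟩
  · rw [stdW_3]; exact ⟨_, _, rfl⟩

lemma stdT_not_congr (hd : ∀ i, 0 < d i) (hs0 : 0 < Real.sin (α 0))
    (hs3 : 0 < Real.sin (α 3)) (c0 c3 : ℝ) :
    ¬ PyrCongruent (stdT d c0 (Real.sin (α 0)) σ c3 (Real.sin (α 3)) 1)
      (stdT d c0 (Real.sin (α 0)) σ c3 (Real.sin (α 3)) (-1)) := by
  rintro ⟨e, -, h2⟩
  have h1 := h2 1
  have h3 := h2 3
  simp only [stdT] at h1 h3
  rw [stdW_1, stdW_1] at h1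
  rw [stdW_3, stdW_3] at h3
  have hde : dist (pt (d 1 * c0) (d 1 * Real.sin (α 0)))
        (pt (d 3 * c3) (1 * (d 3 * Real.sin (α 3))))
      = dist (pt (d 1 * c0) (d 1 * Real.sin (α 0)))
        (pt (d 3 * c3) (-1 * (d 3 * Real.sin (α 3)))) := by
    conv_lhs => rw [← e.dist_eq (pt (d 1 * c0) (d 1 * Real.sin (α 0)))
      (pt (d 3 * c3) (1 * (d 3 * Real.sin (α 3))))]
    rw [h1, h3]
  have hsq := congrArg (fun x => x ^ 2) hde
  simp only [dist_pt_sq] at hsq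
  nlinarith [hsq, mul_pos (mul_pos (hd 1) hs0) (mul_pos (hd 3) hs3)]

set_option maxHeartbeats 1000000 in
/-- classification of flat tuples: explicit coordinates in an orthonormal frame. -/
lemma classify (hd : ∀ i, 0 < d i) (hα : ∀ i, α i ∈ Set.Ioo 0 Real.pi)
    (hσ : σ = 1 ∨ σ = -1)
    (hc1 : Real.cos (α 1) = σ * Real.cos (α 0))
    (hc2 : Real.cos (α 2) = σ * Real.cos (α 3))
    (hne : Real.cos (α 0)^2 ≠ Real.cos (α 3)^2)
    (t : PyrTuple) (ht : t ∈ pyrSet d α) (hflat : IsFlat t) :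
    ∃ (f1 f2 : Pt) (η : ℝ), (η = 1 ∨ η = -1) ∧ ‖f1‖ = 1 ∧ ‖f2‖ = 1 ∧ ⟪f1, f2⟫ = 0 ∧
      t.2 0 = t.1 + ((d 0) • f1 + (0:ℝ) • f2) ∧
      t.2 1 = t.1 + ((d 1 * Real.cos (α 0)) • f1 + (d 1 * Real.sin (α 0)) • f2) ∧
      t.2 2 = t.1 + ((σ * d 2) • f1 + (0:ℝ) • f2) ∧
      t.2 3 = t.1 + ((d 3 * Real.cos (α 3)) • f1 + (η * (d 3 * Real.sin (α 3))) • f2) := by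
  obtain ⟨v, w⟩ := t
  have hs0 : 0 < Real.sin (α 0) := Real.sin_pos_of_pos_of_lt_pi (hα 0).1 (hα 0).2
  have hs3 : 0 < Real.sin (α 3) := Real.sin_pos_of_pos_of_lt_pi (hα 3).1 (hα 3).2
  set X : ZMod 4 → Pt := fun i => w i - v with hXdef
  have hnorm : ∀ i, ‖X i‖ = d i := by
    intro i
    have h := (ht i).1
    rw [dist_eq_norm] at h
    rw [hXdef]
    simpa [norm_sub_rev] using h
  have hinner : ∀ i, ⟪X i, X (i+1)⟫ = d i * d (i+1) * Real.cos (α i) := by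
    intro i
    have h := (ht i).2
    have hrw : ∠ (w i) v (w (i+1)) = InnerProductGeometry.angle (X i) (X (i+1)) := rfl
    rw [hrw] at h
    have h2 := InnerProductGeometry.cos_angle_mul_norm_mul_norm (X i) (X (i+1))
    rw [h, hnorm, hnorm] at h2
    rw [← h2]; ring
  have hn : ∀ i, ⟪X i, X i⟫ = d i ^ 2 := fun i => by
    rw [real_inner_self_eq_norm_sq, hnorm]
  have h01 := hinner 0
  have h12 := hinner 1
  have h23 := hinner 2
  have h30 := hinner 3
  rw [show ((0:ZMod 4)+1) = 1 by decide] at h01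
  rw [show ((1:ZMod 4)+1) = 2 by decide] at h12
  rw [show ((2:ZMod 4)+1) = 3 by decide] at h23
  rw [show ((3:ZMod 4)+1) = 0 by decide] at h30
  have hd0 := hd 0
  -- the frame
  set f1 : Pt := (d 0)⁻¹ • X 0 with hf1def
  have hf1 : ‖f1‖ = 1 := by
    rw [hf1def, norm_smul, hnorm, Real.norm_eq_abs, abs_inv, abs_of_pos hd0]
    field_simp
  have hf1f1 : ⟪f1, f1⟫ = 1 := by rw [real_inner_self_eq_norm_sq, hf1]; norm_num
  have hf1X1 : ⟪f1, X 1⟫ = d 1 * Real.cos (α 0) := by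
    rw [hf1def, real_inner_smul_left, h01]
    field_simp
  set g : Pt := X 1 - (d 1 * Real.cos (α 0)) • f1 with hgdef
  have hgf1 : ⟪f1, g⟫ = 0 := by
    rw [hgdef, inner_sub_right, real_inner_smul_right, hf1X1, hf1f1]
    ring
  have hg : g ≠ 0 := by
    intro h0g
    have hX1 : X 1 = (d 1 * Real.cos (α 0)) • f1 := by
      rw [hgdef, sub_eq_zero] at h0g
      exact h0g
    have hc : d 1 ^ 2 = (d 1 * Real.cos (α 0))^2 := by
      have h := hn 1
      rw [hX1, real_inner_smul_left, real_inner_smul_right, hf1f1] at h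
      nlinarith [h]
    have hpos : 0 < d 1 ^ 2 * Real.sin (α 0) ^ 2 :=
      mul_pos (pow_pos (hd 1) 2) (pow_pos hs0 2)
    nlinarith [Real.sin_sq_add_cos_sq (α 0), hpos, hc]
  set f2 : Pt := ‖g‖⁻¹ • g with hf2def
  have hgn : 0 < ‖g‖ := norm_pos_iff.2 hg
  have hf2 : ‖f2‖ = 1 := by
    rw [hf2def, norm_smul, Real.norm_eq_abs, abs_inv, abs_of_pos hgn]
    field_simp
  have hf2f2 : ⟪f2, f2⟫ = 1 := by rw [real_inner_self_eq_norm_sq, hf2]; norm_num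
  have hf12 : ⟪f1, f2⟫ = 0 := by rw [hf2def, real_inner_smul_right, hgf1, mul_zero]
  have hf21 : ⟪f2, f1⟫ = 0 := by rw [real_inner_comm]; exact hf12
  have hX0 : X 0 = (d 0) • f1 := by
    rw [hf1def, smul_smul, mul_inv_cancel₀ (ne_of_gt hd0), one_smul]
  have hX1 : X 1 = (d 1 * Real.cos (α 0)) • f1 + ‖g‖ • f2 := by
    have hgf2 : ‖g‖ • f2 = g := by
      rw [hf2def, smul_smul, mul_inv_cancel₀ (ne_of_gt hgn), one_smul]
    rw [hgf2, hgdef]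
    abel
  -- span facts
  have hON : Orthonormal ℝ ![f1, f2] := by
    rw [orthonormal_iff_ite]
    intro i j
    fin_cases i <;> fin_cases j <;>
      simp [Matrix.cons_val_zero, Matrix.cons_val_one, Matrix.head_cons,
        hf1f1, hf2f2, hf12, hf21, hf1, hf2]
  set S : Set Pt := {v, w 0, w 1, w 2, w 3} with hSdef
  have hVmem : ∀ i : ZMod 4, X i ∈ vectorSpan ℝ S := by
    intro i
    have hv : v ∈ S := by simp [hSdef]
    have hw : w i ∈ S := by
      rcases zmod4_cases i with rfl|rfl|rfl|rfl <;> simp [hSdef]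
    exact vsub_mem_vectorSpan ℝ hw hv
  have hflat' : Coplanar ℝ S := hflat
  have hfin2 : Module.finrank ℝ (vectorSpan ℝ S) ≤ 2 :=
    coplanar_iff_finrank_le_two.1 hflat'
  have hf1mem : f1 ∈ vectorSpan ℝ S := Submodule.smul_mem _ _ (hVmem 0)
  have hf2mem : f2 ∈ vectorSpan ℝ S :=
    Submodule.smul_mem _ _ (Submodule.sub_mem _ (hVmem 1) (Submodule.smul_mem _ _ hf1mem))
  have hspan : Submodule.span ℝ (Set.range ![f1, f2]) = vectorSpan ℝ S := by
    apply Submodule.eq_of_le_of_finrank_le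
    · rw [Submodule.span_le]
      rintro z ⟨i, rfl⟩
      fin_cases i
      · exact hf1mem
      · exact hf2mem
    · rw [finrank_span_eq_card hON.linearIndependent]
      simpa using hfin2
  have hrange : Set.range ![f1, f2] = {f1, f2} := by
    ext z
    simp [Fin.exists_fin_two, or_comm]
  have hdecomp : ∀ i : ZMod 4, ∃ a b : ℝ, X i = a • f1 + b • f2 := by
    intro i
    have hm := hVmem i
    rw [← hspan, hrange] at hm
    obtain ⟨a, b, hab⟩ := Submodule.mem_span_pair.1 hm
    exact ⟨a, b, hab.symm⟩
  obtain ⟨a2, b2, hX2⟩ := hdecomp 2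
  obtain ⟨a3, b3, hX3⟩ := hdecomp 3
  have hexp : ∀ (a b a' b' : ℝ), ⟪a • f1 + b • f2, a' • f1 + b' • f2⟫ = a*a' + b*b' := by
    intro a b a' b'
    simp only [inner_add_left, inner_add_right, real_inner_smul_left, real_inner_smul_right,
      hf1f1, hf2f2, hf12, hf21]
    ring
  have hX0' : X 0 = (d 0) • f1 + (0:ℝ) • f2 := by rw [hX0]; simp
  -- norm of g
  have hb1 : ‖g‖ = d 1 * Real.sin (α 0) := by
    have h := hn 1
    rw [hX1, hexp] at h
    apply eq_of_sq_eq_sq hgn.le (mul_pos (hd 1) hs0).le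
    nlinarith [Real.sin_sq_add_cos_sq (α 0), h]
  -- coordinates of X 3
  have e30 : a3 * (d 0) + b3 * 0 = d 3 * d 0 * Real.cos (α 3) := by
    rw [← hexp a3 b3 (d 0) 0, ← hX3, ← hX0']
    exact h30
  have ha3 : a3 = d 3 * Real.cos (α 3) := by
    apply mul_right_cancel₀ (ne_of_gt hd0)
    linarith [e30]
  have hn3 : a3^2 + b3^2 = d 3 ^ 2 := by
    have h := hn 3
    rw [hX3, hexp] at h
    linarith [h]
  obtain ⟨η, hη, hb3⟩ : ∃ η : ℝ, (η = 1 ∨ η = -1) ∧ b3 = η * (d 3 * Real.sin (α 3)) := by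
    have hsq : b3^2 = (d 3 * Real.sin (α 3))^2 := by
      rw [ha3] at hn3
      linear_combination hn3 - (d 3)^2 * Real.sin_sq_add_cos_sq (α 3)
    rcases sq_cases hsq with h|h
    · exact ⟨1, Or.inl rfl, by rw [h]; ring⟩
    · exact ⟨-1, Or.inr rfl, by rw [h]; ring⟩
  -- coordinates of X 2 via crux
  have hn2 : a2^2 + b2^2 = d 2 ^ 2 := by
    have h := hn 2
    rw [hX2, hexp] at h
    linarith [h]
  have e12 : (d 1 * Real.cos (α 0)) * a2 + (d 1 * Real.sin (α 0)) * b2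
      = d 1 * d 2 * Real.cos (α 1) := by
    rw [← hexp (d 1 * Real.cos (α 0)) (d 1 * Real.sin (α 0)) a2 b2, ← hb1, ← hX1, ← hX2]
    exact h12
  have e23 : a2 * a3 + b2 * b3 = d 2 * d 3 * Real.cos (α 2) := by
    rw [← hexp a2 b2 a3 b3, ← hX2, ← hX3]
    exact h23
  have hcx1 : Real.cos (α 0) * a2 + Real.sin (α 0) * b2 = σ * Real.cos (α 0) * d 2 := by
    apply mul_left_cancel₀ (ne_of_gt (hd 1))
    rw [hc1] at e12
    linear_combination e12
  have hcx2 : Real.cos (α 3) * a2 + η * Real.sin (α 3) * b2 = σ * Real.cos (α 3) * d 2 := by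
    apply mul_left_cancel₀ (ne_of_gt (hd 3))
    rw [hc2, ha3] at e23
    rw [hb3] at e23
    linear_combination e23
  have hcos0 : Real.cos (α 0)^2 + Real.sin (α 0)^2 = 1 := by
    rw [add_comm]; exact Real.sin_sq_add_cos_sq _
  have hcos3 : Real.cos (α 3)^2 + Real.sin (α 3)^2 = 1 := by
    rw [add_comm]; exact Real.sin_sq_add_cos_sq _
  obtain ⟨ha2, hb2⟩ := crux hs0 hs3 hcos0 hcos3 hne (hd 2) hσ hη hn2 hcx1 hcx2
  have hwX : ∀ i, w i = v + X i := fun i => by simp [hXdef]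
  refine ⟨f1, f2, η, hη, hf1, hf2, hf12, ?_, ?_, ?_, ?_⟩
  · show w 0 = _
    rw [hwX 0, hX0']
  · show w 1 = _
    rw [hwX 1, hX1, hb1]
  · show w 2 = _
    rw [hwX 2, hX2, ha2, hb2]
  · show w 3 = _
    rw [hwX 3, hX3, ha3, hb3]

end DeltoidAux

open DeltoidAux in
/-- Flat realizations of a deltoid: for fixed positive distances `d i` and apex angles
`α i ∈ (0, π)` satisfying the deltoid condition (`(α₁, α₂)` and `(α₃, α₄)` each equal
or supplementary) and `cos² α₁ ≠ cos² α₃`, the set of flat pyramid tuples is nonempty,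
is partitioned by congruence into exactly two classes, and in every flat tuple the
apex and the first and third base points are collinear. -/
theorem deltoid_flat_realizations
    (d α : ZMod 4 → ℝ)
    (hd : ∀ i, 0 < d i)
    (hα : ∀ i, α i ∈ Set.Ioo 0 Real.pi)
    (hdeltoid : (α 0 = α 1 ∧ α 2 = α 3) ∨ (α 0 + α 1 = Real.pi ∧ α 2 + α 3 = Real.pi))
    (hnot : Real.cos (α 0) ^ 2 ≠ Real.cos (α 2) ^ 2) :
    (∃ t ∈ pyrSet d α, IsFlat t) ∧
    (∃ t₁ t₂, t₁ ∈ pyrSet d α ∧ IsFlat t₁ ∧ t₂ ∈ pyrSet d α ∧ IsFlat t₂ ∧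
      ¬ PyrCongruent t₁ t₂ ∧
      ∀ t ∈ pyrSet d α, IsFlat t → (PyrCongruent t t₁ ∨ PyrCongruent t t₂)) ∧
    (∀ t ∈ pyrSet d α, IsFlat t → Collinear ℝ ({t.1, t.2 0, t.2 2} : Set Pt)) := by
  have hs0 : 0 < Real.sin (α 0) := Real.sin_pos_of_pos_of_lt_pi (hα 0).1 (hα 0).2
  have hs3 : 0 < Real.sin (α 3) := Real.sin_pos_of_pos_of_lt_pi (hα 3).1 (hα 3).2
  obtain ⟨σ, hσ, hc1, hc2⟩ : ∃ σ : ℝ, (σ = 1 ∨ σ = -1) ∧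
      Real.cos (α 1) = σ * Real.cos (α 0) ∧ Real.cos (α 2) = σ * Real.cos (α 3) := by
    rcases hdeltoid with ⟨h01, h23⟩ | ⟨h01, h23⟩
    · exact ⟨1, Or.inl rfl, by rw [← h01, one_mul], by rw [h23, one_mul]⟩
    · refine ⟨-1, Or.inr rfl, ?_, ?_⟩
      · rw [show α 1 = Real.pi - α 0 by linarith, Real.cos_pi_sub]; ring
      · rw [show α 2 = Real.pi - α 3 by linarith, Real.cos_pi_sub]; ring
  have hσ2 : σ ^ 2 = 1 := by rcases hσ with h | h <;> rw [h] <;> norm_num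
  have hne3 : Real.cos (α 0) ^ 2 ≠ Real.cos (α 3) ^ 2 := by
    intro h
    apply hnot
    rw [hc2, mul_pow, hσ2, one_mul, ← h]
  have hm1 : stdT d (Real.cos (α 0)) (Real.sin (α 0)) σ (Real.cos (α 3)) (Real.sin (α 3)) 1
      ∈ pyrSet d α := stdT_mem hd hα hσ (Or.inl rfl) hc1 hc2
  have hm2 : stdT d (Real.cos (α 0)) (Real.sin (α 0)) σ (Real.cos (α 3)) (Real.sin (α 3)) (-1)
      ∈ pyrSet d α := stdT_mem hd hα hσ (Or.inr rfl) hc1 hc2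
  have hcl : ∀ t ∈ pyrSet d α, IsFlat t →
      (PyrCongruent t
        (stdT d (Real.cos (α 0)) (Real.sin (α 0)) σ (Real.cos (α 3)) (Real.sin (α 3)) 1) ∨
       PyrCongruent t
        (stdT d (Real.cos (α 0)) (Real.sin (α 0)) σ (Real.cos (α 3)) (Real.sin (α 3)) (-1))) := by
    intro t ht htf
    obtain ⟨f1, f2, η, hη, hnf1, hnf2, h12, e0, e1, e2, e3⟩ :=
      classify hd hα hσ hc1 hc2 hne3 t ht htf
    obtain ⟨e, he⟩ := exists_frame_isometry t.1 f1 f2 hnf1 hnf2 h12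
    have hcong : PyrCongruent
        (stdT d (Real.cos (α 0)) (Real.sin (α 0)) σ (Real.cos (α 3)) (Real.sin (α 3)) η) t := by
      refine ⟨e, ?_, fun i => ?_⟩
      · show e (0 : Pt) = t.1
        rw [show (0 : Pt) = pt 0 0 by simp [pt], he]
        simp
      · show e (stdW d (Real.cos (α 0)) (Real.sin (α 0)) σ (Real.cos (α 3)) (Real.sin (α 3)) η i)
          = t.2 i
        rcases zmod4_cases i with rfl | rfl | rfl | rfl
        · rw [stdW_0, he]; exact e0.symm
        · rw [stdW_1, he]; exact e1.symm
        · rw [stdW_2, he]; exact e2.symm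
        · rw [stdW_3, he]; exact e3.symm
    rcases hη with rfl | rfl
    · exact Or.inl (pyrCongruent_symm hcong)
    · exact Or.inr (pyrCongruent_symm hcong)
  refine ⟨⟨_, hm1, stdT_flat _ _ _ _ _ _⟩,
    ⟨_, _, hm1, stdT_flat _ _ _ _ _ _, hm2, stdT_flat _ _ _ _ _ _,
      stdT_not_congr hd hs0 hs3 _ _, hcl⟩, ?_⟩
  intro t ht htf
  obtain ⟨f1, f2, η, hη, hnf1, hnf2, h12, e0, e1, e2, e3⟩ :=
    classify hd hα hσ hc1 hc2 hne3 t ht htf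
  rw [collinear_iff_of_mem (Set.mem_insert t.1 _)]
  refine ⟨f1, fun p hp => ?_⟩
  simp only [Set.mem_insert_iff, Set.mem_singleton_iff] at hp
  rcases hp with rfl | rfl | rfl
  · exact ⟨0, by simp⟩
  · exact ⟨d 0, by rw [e0]; simp only [zero_smul, add_zero, vadd_eq_add]; abel⟩
  · exact ⟨σ * d 2, by rw [e2]; simp only [zero_smul, add_zero, vadd_eq_add]; abel⟩
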